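/- For n=2, the map s defined by s(x^(1)) = y^(2)(x^(1)+y^(1))/(x^(2)+y^(2)), s(x^(2)) = y^(1)(x^(2)+y^(2))/(x^(1)+y^(1)), s(y^(1)) = x^(2)(x^(1)+y^(1))/(x^(2)+y^(2)), s(y^(2)) = x^(1)(x^(2)+y^(2))/(x^(1)+y^(1)) satisfies the matrix identity M(x^(1),x^(2)) M(y^(1),y^(2)) = M(s(x^(1)),s(x^(2))) M(s(y^(1)),s(y^(2))), where M(a,b) = [[1, a],[b t, 1]] over the polynomial ring in t. -/

import Mathlib

open Polynomial

/-- The 2×2 whirl matrix `M(a,b) = [[1, a],[b t, 1]]` over `F[t]`. -/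
noncomputable def whirl2 {F : Type*} [Field F] (a b : F) :
    Matrix (Fin 2) (Fin 2) (Polynomial F) :=
  !![1, C a; C b * X, 1]

/-- The `n = 2` birational `R`-matrix `s` satisfies
`M(x¹,x²) M(y¹,y²) = M(s(x¹),s(x²)) M(s(y¹),s(y²))`. -/
theorem whirl2_swap {F : Type*} [Field F] (a b c d : F)
    (h1 : a + c ≠ 0) (h2 : b + d ≠ 0) :
    whirl2 a b * whirl2 c d =
      whirl2 (d * (a + c) / (b + d)) (c * (b + d) / (a + c)) *
        whirl2 (b * (a + c) / (b + d)) (a * (b + d) / (a + c)) := by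
  have e1 : d * (a + c) / (b + d) + b * (a + c) / (b + d) = a + c := by
    field_simp; ring
  have e2 : c * (b + d) / (a + c) + a * (b + d) / (a + c) = b + d := by
    field_simp; ring
  have e3 : d * (a + c) / (b + d) * (a * (b + d) / (a + c)) = a * d := by
    field_simp
  have e4 : c * (b + d) / (a + c) * (b * (a + c) / (b + d)) = b * c := by
    field_simp
  unfold whirl2
  ext i j
  fin_cases i <;> fin_cases j <;>
    simp [Matrix.mul_apply, Fin.sum_univ_two, coeff_C] <;>
    first
      | rfl
      | (field_simp; ring; done)
      | (split_ifs <;> first | rfl | (field_simp; ring))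
      | (rename_i n; first
          | linear_combination (-(X.coeff n)) * e3
          | linear_combination (-(X.coeff n)) * e4)
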